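/- Let P be a countable field. Then there exists a countable associative unital P-algebra H that is not logically noetherian; that is, there are an n, a subset S of FreeAlgebra P (Fin n), and an element w ∈ cl_H(S) such that w ∉ cl_H(S₀) for every finite subset S₀ ⊆ S. -/

import Mathlib

/-- The `H`-closure of a set `S` of elements of the free associative `P`-algebra on `n`
generators. -/
def AClosure (P : Type*) [CommSemiring P] (H : Type*) [Semiring H] [Algebra P H] {n : ℕ}
    (S : Set (FreeAlgebra P (Fin n))) : Set (FreeAlgebra P (Fin n)) :=
  {w | ∀ φ : FreeAlgebra P (Fin n) →ₐ[P] H, (∀ s ∈ S, φ s = 0) → φ w = 0}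

set_option maxHeartbeats 1600000
set_option synthInstance.maxHeartbeats 400000

namespace NLN

variable (P : Type) [Field P]

abbrev A := Module.End P (ℕ →₀ P)

noncomputable def E (i j : ℕ) : A P := (Finsupp.lsingle i).comp (Finsupp.lapply j)

lemma E_apply (i j s : ℕ) (x : P) :
    E P i j (Finsupp.single s x) = if j = s then Finsupp.single i x else 0 := by
  simp [E, Finsupp.single_apply]
  split_ifs with h1 h2 h2 <;> simp_all

lemma E_mul (i j k l : ℕ) : E P i j * E P k l = if j = k then E P i l else 0 := by
  apply LinearMap.ext
  intro v
  simp only [Module.End.mul_apply, E, LinearMap.comp_apply, Finsupp.lapply_apply,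
    Finsupp.lsingle_apply, Finsupp.single_apply]
  split_ifs with h1 h2 h2 <;> simp_all <;> simp [eq_comm] at h1 <;> simp_all

lemma E_ne_zero (i j : ℕ) : E P i j ≠ 0 := by
  intro h
  have := congrArg (fun f : A P => f (Finsupp.single j (1:P)) i) h
  simp [E_apply, Finsupp.single_apply] at this


lemma A_sub_self (x : A P) : x - x = 0 := sub_self (G := A P) x

lemma A_sub_add_sub (a b c d : A P) : a + c - (b + d) = a - b + (c - d) :=
  (sub_add_sub_comm (α := A P) a b c d).symm

lemma A_smul_sub (r : P) (a b : A P) : r • a - r • b = r • (a - b) :=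
  (smul_sub r a b).symm

def EE : Set (A P) := {x | ∃ i j : ℕ, i < j ∧ x = E P i j}

noncomputable def NN : Submodule P (A P) := Submodule.span P (EE P)

noncomputable def W : Submodule P (A P) := Submodule.span P ({1} ∪ EE P)

lemma NN_sub_mem {x y : A P} (hx : x ∈ NN P) (hy : y ∈ NN P) : x - y ∈ NN P :=
  @Submodule.sub_mem P (A P) _ _ _ (NN P) x y hx hy

lemma NN_le_W : NN P ≤ W P := Submodule.span_mono Set.subset_union_right

lemma one_mem_W : (1 : A P) ∈ W P :=
  Submodule.subset_span (Set.mem_union_left _ rfl)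

lemma E_mem_NN {i j : ℕ} (h : i < j) : E P i j ∈ NN P :=
  Submodule.subset_span ⟨i, j, h, rfl⟩

lemma mul_mem_NN_NN {x y : A P} (hx : x ∈ NN P) (hy : y ∈ NN P) : x * y ∈ NN P := by
  induction hx using Submodule.span_induction with
  | mem x hx =>
    induction hy using Submodule.span_induction with
    | mem y hy =>
      obtain ⟨i, j, hij, rfl⟩ := hx
      obtain ⟨k, l, hkl, rfl⟩ := hy
      rw [E_mul]
      split_ifs with h
      · exact E_mem_NN P (lt_trans hij (h ▸ hkl))
      · exact (NN P).zero_mem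
    | zero => simpa using (NN P).zero_mem
    | add y z _ _ hy hz => rw [mul_add]; exact (NN P).add_mem hy hz
    | smul r y _ hy => rw [mul_smul_comm]; exact (NN P).smul_mem r hy
  | zero => simpa using (NN P).zero_mem
  | add x y _ _ hx hy => rw [add_mul]; exact (NN P).add_mem hx hy
  | smul r x _ hx => rw [smul_mul_assoc]; exact (NN P).smul_mem r hx

lemma mul_mem_W_W {x y : A P} (hx : x ∈ W P) (hy : y ∈ W P) : x * y ∈ W P := by
  induction hx using Submodule.span_induction with
  | mem x hx =>
    induction hy using Submodule.span_induction with
    | mem y hy =>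
      rcases hx with rfl | hx
      · rcases hy with rfl | hy
        · simpa using one_mem_W P
        · rw [one_mul]; exact Submodule.subset_span (Set.mem_union_right _ hy)
      · rcases hy with rfl | hy
        · rw [mul_one]; exact Submodule.subset_span (Set.mem_union_right _ hx)
        · exact NN_le_W P (mul_mem_NN_NN P (Submodule.subset_span hx) (Submodule.subset_span hy))
    | zero => simpa using (W P).zero_mem
    | add y z _ _ hy hz => rw [mul_add]; exact (W P).add_mem hy hz
    | smul r y _ hy => rw [mul_smul_comm]; exact (W P).smul_mem r hy
  | zero => simpa using (W P).zero_mem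
  | add x y _ _ hx hy => rw [add_mul]; exact (W P).add_mem hx hy
  | smul r x _ hx => rw [smul_mul_assoc]; exact (W P).smul_mem r hx

lemma comm_mem_NN_aux {y : A P} (hy : y ∈ ({1} ∪ EE P : Set (A P))) :
    ∀ x ∈ W P, x * y - y * x ∈ NN P := by
  intro x hx
  induction hx using Submodule.span_induction with
  | mem x hx =>
    rcases hx with rfl | hx
    · rw [one_mul, mul_one, A_sub_self]; exact (NN P).zero_mem
    · rcases hy with rfl | hy
      · rw [mul_one, one_mul, A_sub_self]; exact (NN P).zero_mem
      · exact NN_sub_mem P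
          (mul_mem_NN_NN P (Submodule.subset_span hx) (Submodule.subset_span hy))
          (mul_mem_NN_NN P (Submodule.subset_span hy) (Submodule.subset_span hx))
  | zero => rw [zero_mul, mul_zero, A_sub_self]; exact (NN P).zero_mem
  | add x z hx1 hz1 hx hz =>
    have h : (x + z) * y - y * (x + z) = (x * y - y * x) + (z * y - y * z) := by
      rw [add_mul, mul_add, A_sub_add_sub]
    rw [h]; exact (NN P).add_mem hx hz
  | smul r x hx1 hx =>
    have h : (r • x) * y - y * (r • x) = r • (x * y - y * x) := by
      rw [smul_mul_assoc, mul_smul_comm, A_smul_sub]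
    rw [h]; exact (NN P).smul_mem r hx

/-- commutators of elements of W lie in NN -/
lemma comm_mem_NN {x y : A P} (hx : x ∈ W P) (hy : y ∈ W P) : x * y - y * x ∈ NN P := by
  induction hy using Submodule.span_induction with
  | mem y hy => exact comm_mem_NN_aux P hy x hx
  | zero => rw [mul_zero, zero_mul, A_sub_self]; exact (NN P).zero_mem
  | add y z hy1 hz1 hy hz =>
    have h : x * (y + z) - (y + z) * x = (x * y - y * x) + (x * z - z * x) := by
      rw [mul_add, add_mul, A_sub_add_sub]
    rw [h]; exact (NN P).add_mem hy hz
  | smul r y hy1 hy =>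
    have h : x * (r • y) - (r • y) * x = r • (x * y - y * x) := by
      rw [mul_smul_comm, smul_mul_assoc]; exact (smul_sub r (x*y) (y*x)).symm
    rw [h]; exact (NN P).smul_mem r hy


noncomputable def G (R s : ℕ) : Submodule P (A P) :=
  Submodule.span P {x | ∃ i j : ℕ, i + s ≤ j ∧ j ≤ R ∧ x = E P i j}

lemma G_mono {R1 R2 s : ℕ} (h : R1 ≤ R2) : G P R1 s ≤ G P R2 s := by
  apply Submodule.span_mono
  rintro x ⟨i, j, h1, h2, rfl⟩
  exact ⟨i, j, h1, le_trans h2 h, rfl⟩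

lemma exists_G_of_mem_NN {f : A P} (hf : f ∈ NN P) : ∃ R, f ∈ G P R 1 := by
  have hdir : Directed (· ≤ ·) (fun R => G P R 1) := fun R1 R2 =>
    ⟨max R1 R2, G_mono P (le_max_left _ _), G_mono P (le_max_right _ _)⟩
  have hle : NN P ≤ ⨆ R, G P R 1 := by
    rw [NN, Submodule.span_le]
    rintro x ⟨i, j, hij, rfl⟩
    have h1 : E P i j ∈ G P j 1 :=
      Submodule.subset_span ⟨i, j, by omega, le_refl j, rfl⟩
    exact le_iSup (fun R => G P R 1) j h1
  have := hle hf
  rwa [Submodule.mem_iSup_of_directed _ hdir] at this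

lemma G_mul {R s : ℕ} {x y : A P} (hx : x ∈ G P R s) (hy : y ∈ G P R 1) :
    x * y ∈ G P R (s + 1) := by
  induction hx using Submodule.span_induction with
  | mem x hx =>
    induction hy using Submodule.span_induction with
    | mem y hy =>
      obtain ⟨i, j, hij, hjR, rfl⟩ := hx
      obtain ⟨k, l, hkl, hlR, rfl⟩ := hy
      rw [E_mul]
      split_ifs with h
      · exact Submodule.subset_span ⟨i, l, by omega, hlR, rfl⟩
      · exact (G P R (s+1)).zero_mem
    | zero => rw [mul_zero]; exact (G P R (s+1)).zero_mem
    | add y z hy1 hz1 hy hz => rw [mul_add]; exact (G P R (s+1)).add_mem hy hz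
    | smul r y hy1 hy => rw [mul_smul_comm]; exact (G P R (s+1)).smul_mem r hy
  | zero => rw [zero_mul]; exact (G P R (s+1)).zero_mem
  | add x y hx1 hy1 hx hy => rw [add_mul]; exact (G P R (s+1)).add_mem hx hy
  | smul r x hx1 hx => rw [smul_mul_assoc]; exact (G P R (s+1)).smul_mem r hx

lemma G_pow {R : ℕ} {f : A P}(hf : f ∈ G P R 1) : ∀ k, f ^ (k+1) ∈ G P R (k+1) := by
  intro k
  induction k with
  | zero => rw [pow_one]; exact hf
  | succ k ih =>
    rw [pow_succ]
    exact G_mul P ih hf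

lemma G_eq_bot (R : ℕ) : G P R (R + 1) = ⊥ := by
  rw [G]
  convert Submodule.span_empty
  rw [Set.eq_empty_iff_forall_notMem]
  rintro x ⟨i, j, h1, h2, rfl⟩
  omega

lemma nilpotent_of_mem_NN {f : A P} (hf : f ∈ NN P) : ∃ M, 1 ≤ M ∧ f ^ M = 0 := by
  obtain ⟨R, hR⟩ := exists_G_of_mem_NN P hf
  refine ⟨R + 1, by omega, ?_⟩
  have := G_pow P hR R
  rw [G_eq_bot] at this
  simpa using this


/-- Type alias for the endomorphism algebra, with a single canonical `Ring` instance
(avoiding the `Semiring`/`Ring` instance diamond on `Module.End` of `Finsupp`). -/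
def AA : Type := Module.End P (ℕ →₀ P)

noncomputable instance : Ring (AA P) := inferInstanceAs (Ring (Module.End P (ℕ →₀ P)))
noncomputable instance : Algebra P (AA P) :=
  inferInstanceAs (Algebra P (Module.End P (ℕ →₀ P)))

def EE' : Set (AA P) := EE P

noncomputable def Hsub : Subalgebra P (AA P) := Algebra.adjoin P (EE' P)

lemma mem_Hsub_iff {x : AA P} : x ∈ Hsub P ↔ x ∈ W P := by
  constructor
  · intro hx
    induction hx using Algebra.adjoin_induction with
    | mem x hx => exact Submodule.subset_span (Set.mem_union_right _ hx)
    | algebraMap r =>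
      rw [Algebra.algebraMap_eq_smul_one]
      exact (W P).smul_mem r (one_mem_W P)
    | add x y hx1 hy1 hx hy => exact (W P).add_mem hx hy
    | mul x y hx1 hy1 hx hy => exact mul_mem_W_W P hx hy
  · intro hx
    induction hx using Submodule.span_induction with
    | mem x hx =>
      rcases hx with rfl | hx
      · exact (Hsub P).one_mem
      · exact Algebra.subset_adjoin hx
    | zero => exact (Hsub P).zero_mem
    | add x y hx1 hy1 hx hy => exact (Hsub P).add_mem hx hy
    | smul r x hx1 hx => exact (Hsub P).smul_mem hx r

lemma countable_Hsub [Countable P] : Countable (Hsub P) := by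
  have hEE : (EE P).Countable := by
    apply (Set.countable_range (fun p : ℕ × ℕ => E P p.1 p.2)).mono
    rintro x ⟨i, j, hij, rfl⟩
    exact ⟨(i, j), rfl⟩
  have hS : ({1} ∪ EE P : Set (A P)).Countable :=
    (Set.countable_singleton 1).union hEE
  have hW : (W P : Set (A P)).Countable := by
    rw [W, Finsupp.span_eq_range_linearCombination P ({1} ∪ EE P)]
    have : Countable ↥({1} ∪ EE P : Set (A P)) := hS.to_subtype
    exact (Set.countable_range _).mono (by rw [LinearMap.coe_range])
  have hc : Countable {x : AA P // x ∈ W P} := hW.to_subtype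
  exact Countable.of_equiv _ (Equiv.subtypeEquivRight (fun x : AA P => (mem_Hsub_iff P).symm))


/-! ### Witness elements -/

noncomputable def ev (s : ℕ) : ℕ →₀ P := Finsupp.single s (1 : P)

variable (m : ℕ)

noncomputable def cc : A P := ∑ i ∈ Finset.range (m+4), E P (2*i) (2*i+1)
noncomputable def dd : A P := ∑ i ∈ Finset.range (m+4), E P (2*i+1) (2*i+2)
noncomputable def aa : A P := E P 0 2 + ∑ j ∈ Finset.range (m+1), E P (2*j+4) (2*m+15)
noncomputable def bb : A P := cc P m * dd P m - dd P m * cc P m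

lemma cc_mem : cc P m ∈ Hsub P :=
  sum_mem (fun i _ => Algebra.subset_adjoin (s := EE' P) ⟨2*i, 2*i+1, by omega, rfl⟩)

lemma dd_mem : dd P m ∈ Hsub P :=
  sum_mem (fun i _ => Algebra.subset_adjoin (s := EE' P) ⟨2*i+1, 2*i+2, by omega, rfl⟩)

lemma aa_mem : aa P m ∈ Hsub P := by
  apply (Hsub P).add_mem
  · exact Algebra.subset_adjoin ⟨0, 2, by omega, rfl⟩
  · exact sum_mem (fun j hj => Algebra.subset_adjoin
      ⟨2*j+4, 2*m+15, by simp only [Finset.mem_range] at hj; omega, rfl⟩)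

lemma sumE_apply (n : ℕ) (p q : ℕ → ℕ) (s : ℕ) :
    (∑ i ∈ Finset.range n, E P (p i) (q i)) (ev P s) =
      ∑ i ∈ Finset.range n, if q i = s then ev P (p i) else 0 := by
  rw [LinearMap.sum_apply]
  exact Finset.sum_congr rfl (fun i _ => by rw [ev, E_apply, ev])

lemma cc_ev_odd {i : ℕ} (hi : i ≤ m+3) : cc P m (ev P (2*i+1)) = ev P (2*i) := by
  rw [cc, sumE_apply]
  rw [Finset.sum_eq_single_of_mem i (by simp; omega) (fun b _ hb => if_neg (by omega))]
  rw [if_pos rfl]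

lemma cc_ev_even (i : ℕ) : cc P m (ev P (2*i)) = 0 := by
  rw [cc, sumE_apply]
  exact Finset.sum_eq_zero (fun b _ => if_neg (by omega))

lemma dd_ev_even {i : ℕ} (hi : i ≤ m+3) : dd P m (ev P (2*i+2)) = ev P (2*i+1) := by
  rw [dd, sumE_apply]
  rw [Finset.sum_eq_single_of_mem i (by simp; omega) (fun b _ hb => if_neg (by omega))]
  rw [if_pos rfl]

lemma dd_ev_odd (i : ℕ) : dd P m (ev P (2*i+1)) = 0 := by
  rw [dd, sumE_apply]
  exact Finset.sum_eq_zero (fun b _ => if_neg (by omega))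

lemma dd_ev_zero : dd P m (ev P 0) = 0 := by
  rw [dd, sumE_apply]
  exact Finset.sum_eq_zero (fun b _ => if_neg (by omega))

lemma bb_ev_succ {i : ℕ} (hi : i ≤ m+3) : bb P m (ev P (2*(i+1))) = ev P (2*i) := by
  have h1 : (2*(i+1) : ℕ) = 2*i+2 := by ring
  rw [bb, LinearMap.sub_apply, Module.End.mul_apply, Module.End.mul_apply, h1,
    dd_ev_even P m hi, cc_ev_odd P m hi]
  have h2 : (2*i+2 : ℕ) = 2*(i+1) := by ring
  rw [h2, cc_ev_even, map_zero, sub_zero]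

lemma bb_ev_zero : bb P m (ev P 0) = 0 := by
  have h0 : (0:ℕ) = 2*0 := rfl
  rw [bb, LinearMap.sub_apply, Module.End.mul_apply, Module.End.mul_apply,
    dd_ev_zero, h0, cc_ev_even, map_zero, map_zero, sub_zero]

lemma bb_pow_ev (k : ℕ) : ∀ i, i ≤ m+4 →
    (bb P m ^ k) (ev P (2*i)) = if k ≤ i then ev P (2*(i-k)) else 0 := by
  induction k with
  | zero =>
    intro i hi
    simp [pow_zero, Module.End.one_apply]
  | succ k ih =>
    intro i hi
    rw [pow_succ, Module.End.mul_apply]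
    rcases Nat.eq_zero_or_pos i with rfl | hpos
    · have h0 : (2*0:ℕ) = 0 := rfl
      rw [h0, bb_ev_zero, map_zero, if_neg (by omega)]
    · obtain ⟨i', rfl⟩ : ∃ i', i = i' + 1 := ⟨i - 1, by omega⟩
      rw [bb_ev_succ P m (by omega), ih i' (by omega)]
      by_cases h : k ≤ i'
      · rw [if_pos h, if_pos (by omega)]
        congr 1
        omega
      · rw [if_neg h, if_neg (by omega)]

lemma aa_ev_two : aa P m (ev P 2) = ev P 0 := by
  rw [aa, LinearMap.add_apply, sumE_apply]
  have h1 : E P 0 2 (ev P 2) = ev P 0 := by rw [ev, E_apply, if_pos rfl, ev]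
  rw [h1, Finset.sum_eq_zero (fun b _ => if_neg (by omega)), add_zero]

lemma aa_ev_T : aa P m (ev P (2*m+15)) = ∑ j ∈ Finset.range (m+1), ev P (2*j+4) := by
  rw [aa, LinearMap.add_apply, sumE_apply]
  have h1 : E P 0 2 (ev P (2*m+15)) = 0 := by rw [ev, E_apply, if_neg (by omega)]
  rw [h1, zero_add]
  exact Finset.sum_congr rfl (fun j _ => if_pos rfl)

lemma aa_ev_other {s : ℕ} (h2 : s ≠ 2) (hT : s ≠ 2*m+15) : aa P m (ev P s) = 0 := by
  rw [aa, LinearMap.add_apply, sumE_apply]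
  have h1 : E P 0 2 (ev P s) = 0 := by rw [ev, E_apply, if_neg (by omega)]
  rw [h1, Finset.sum_eq_zero (fun b _ => if_neg (by omega)), add_zero]

lemma end_ext {f g : A P} (h : ∀ s, f (ev P s) = g (ev P s)) : f = g := by
  apply Finsupp.lhom_ext
  intro s b
  have hb : (Finsupp.single s b : ℕ →₀ P) = b • ev P s := by
    rw [ev, Finsupp.smul_single, smul_eq_mul, mul_one]
  rw [hb, map_smul, map_smul, h]

lemma key (k : ℕ) (hk1 : 1 ≤ k) (hk2 : k ≤ m+1) :
    aa P m * bb P m ^ k * aa P m = E P 0 (2*m+15) := by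
  apply end_ext
  intro s
  rw [Module.End.mul_apply, Module.End.mul_apply]
  have hR : (E P 0 (2*m+15)) (ev P s) = if 2*m+15 = s then ev P 0 else 0 := by
    rw [ev, E_apply]; rfl
  rw [hR]
  by_cases hT : s = 2*m+15
  · subst hT
    rw [if_pos rfl, aa_ev_T, map_sum, map_sum]
    rw [Finset.sum_congr rfl (fun j (hj : j ∈ Finset.range (m+1)) => by
      have hj' : j ≤ m := by simpa [Nat.lt_succ_iff] using hj
      have h4 : (2*j+4 : ℕ) = 2*(j+2) := by ring
      rw [h4, bb_pow_ev P m k (j+2) (by omega)])]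
    rw [Finset.sum_eq_single_of_mem (k-1) (by simp; omega)
      (fun b hb hbk => ?_)]
    · rw [if_pos (by omega)]
      have : (2*(k-1+2-k) : ℕ) = 2 := by omega
      rw [this, aa_ev_two]
    · by_cases hkb : k ≤ b + 2
      · rw [if_pos hkb]
        exact aa_ev_other P m (by omega) (by omega)
      · rw [if_neg hkb, map_zero]
  · rw [if_neg (fun hh => hT hh.symm)]
    by_cases h2 : s = 2
    · subst h2
      rw [aa_ev_two]
      have h0 : (0:ℕ) = 2*0 := rfl
      rw [h0, bb_pow_ev P m k 0 (by omega), if_neg (by omega), map_zero]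
    · rw [aa_ev_other P m h2 hT, map_zero, map_zero]

lemma E0T_ne_zero : (E P 0 (2*m+15) : A P) ≠ 0 := E_ne_zero P 0 (2*m+15)


/-! ### The relations in the free algebra -/

noncomputable def Xg : FreeAlgebra P (Fin 4) := FreeAlgebra.ι P 0
noncomputable def Yg : FreeAlgebra P (Fin 4) := FreeAlgebra.ι P 1
noncomputable def Ug : FreeAlgebra P (Fin 4) := FreeAlgebra.ι P 2
noncomputable def Vg : FreeAlgebra P (Fin 4) := FreeAlgebra.ι P 3

noncomputable def s0 : FreeAlgebra P (Fin 4) := Yg P - (Ug P * Vg P - Vg P * Ug P)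

noncomputable def srel (k : ℕ) : FreeAlgebra P (Fin 4) :=
  Xg P * Yg P ^ k * Xg P - Xg P * Yg P ^ (k+1) * Xg P

def SS : Set (FreeAlgebra P (Fin 4)) := {s0 P} ∪ {g | ∃ k, 1 ≤ k ∧ g = srel P k}

noncomputable def wel : FreeAlgebra P (Fin 4) := Xg P * Yg P * Xg P

/-- (i) `wel` is in the closure of `SS`. -/
lemma wel_mem_closure : wel P ∈ AClosure P (Hsub P) (SS P) := by
  intro φ hφ
  set ψ : FreeAlgebra P (Fin 4) →ₐ[P] AA P := (Hsub P).val.comp φ with hψdef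
  have hcoe : ∀ g : FreeAlgebra P (Fin 4), ψ g = (φ g : AA P) := fun g => rfl
  have hzero : ∀ g, φ g = 0 → ψ g = 0 := by
    intro g hg
    rw [hcoe, hg]; rfl
  -- the image of Y is a commutator of elements of W
  have h0 : φ (s0 P) = 0 := hφ _ (Set.mem_union_left _ rfl)
  have hY : ψ (Yg P) = ψ (Ug P) * ψ (Vg P) - ψ (Vg P) * ψ (Ug P) := by
    have := hzero _ h0
    rw [s0] at this
    rw [map_sub, map_sub, map_mul, map_mul, sub_eq_zero] at this
    exact this
  have hUW : ψ (Ug P) ∈ W P := (mem_Hsub_iff P).mp (φ (Ug P)).2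
  have hVW : ψ (Vg P) ∈ W P := (mem_Hsub_iff P).mp (φ (Vg P)).2
  have hYN : ψ (Yg P) ∈ NN P := by rw [hY]; exact comm_mem_NN P hUW hVW
  obtain ⟨M, hM1, hM0'⟩ := nilpotent_of_mem_NN P hYN
  have hM0 : ψ (Yg P) ^ M = (0 : AA P) := hM0'
  -- the telescoping relations
  have hrel : ∀ k, 1 ≤ k → ψ (Xg P) * ψ (Yg P) ^ k * ψ (Xg P)
      = ψ (Xg P) * ψ (Yg P) ^ (k+1) * ψ (Xg P) := by
    intro k hk
    have hs : φ (srel P k) = 0 := hφ _ (Set.mem_union_right _ ⟨k, hk, rfl⟩)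
    have := hzero _ hs
    rw [srel, map_sub, map_mul, map_mul, map_mul, map_mul, map_pow, map_pow,
      sub_eq_zero] at this
    exact this
  have hstar : ∀ k, 1 ≤ k → ψ (Xg P) * ψ (Yg P) * ψ (Xg P)
      = ψ (Xg P) * ψ (Yg P) ^ k * ψ (Xg P) := by
    intro k hk
    induction k, hk using Nat.le_induction with
    | base => rw [pow_one]
    | succ k hk ih => rw [ih]; exact hrel k hk
  have hw : ψ (wel P) = 0 := by
    rw [wel, map_mul, map_mul, hstar M hM1, hM0, mul_zero, zero_mul]
  have : (φ (wel P) : AA P) = 0 := by rw [← hcoe]; exact hw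
  exact Subtype.ext this

open Classical in
/-- index extraction -/
noncomputable def idx (g : FreeAlgebra P (Fin 4)) : ℕ :=
  if h : ∃ k, 1 ≤ k ∧ g = srel P k then h.choose else 0

/-- (ii) no finite subset suffices. -/
lemma not_mem_closure_finset (S₀ : Finset (FreeAlgebra P (Fin 4))) (hS₀ : ↑S₀ ⊆ SS P) :
    wel P ∉ AClosure P (Hsub P) (S₀ : Set (FreeAlgebra P (Fin 4))) := by
  intro hcl
  set m : ℕ := S₀.sup (idx P) with hm
  set aH : Hsub P := ⟨aa P m, aa_mem P m⟩ with haH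
  set cH : Hsub P := ⟨cc P m, cc_mem P m⟩ with hcH
  set dH : Hsub P := ⟨dd P m, dd_mem P m⟩ with hdH
  set bH : Hsub P := cH * dH - dH * cH with hbH
  set φ : FreeAlgebra P (Fin 4) →ₐ[P] Hsub P :=
    FreeAlgebra.lift P ![aH, bH, cH, dH] with hφdef
  have hX : φ (Xg P) = aH := FreeAlgebra.lift_ι_apply _ _
  have hYφ : φ (Yg P) = bH := FreeAlgebra.lift_ι_apply _ _
  have hU : φ (Ug P) = cH := FreeAlgebra.lift_ι_apply _ _
  have hV : φ (Vg P) = dH := FreeAlgebra.lift_ι_apply _ _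
  set ψ : FreeAlgebra P (Fin 4) →ₐ[P] AA P := (Hsub P).val.comp φ with hψdef
  have hcoe : ∀ g : FreeAlgebra P (Fin 4), ψ g = (φ g : AA P) := fun g => rfl
  have hψX : ψ (Xg P) = (aa P m : AA P) := by rw [hcoe, hX]
  have hψY : ψ (Yg P) = (bb P m : AA P) := by
    rw [hcoe, hYφ]
    show (cc P m : A P) * dd P m - dd P m * cc P m = bb P m
    rw [bb]
  -- killing a single telescoping relation
  have hsk : ∀ k, 1 ≤ k → k ≤ m → φ (srel P k) = 0 := by
    intro k hk1 hk2
    have hpsi : ψ (srel P k) = 0 := by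
      rw [srel, map_sub, map_mul, map_mul, map_mul, map_mul, map_pow, map_pow,
        hψX, hψY]
      have hA : (aa P m : A P) * bb P m ^ k * aa P m
          - aa P m * bb P m ^ (k+1) * aa P m = (0 : A P) := by
        rw [key P m k hk1 (by omega), key P m (k+1) (by omega) (by omega), A_sub_self]
      exact hA
    exact Subtype.ext hpsi
  -- φ kills every element of S₀
  have hkill : ∀ g ∈ (S₀ : Set (FreeAlgebra P (Fin 4))), φ g = 0 := by
    intro g hg
    rcases hS₀ hg with hg0 | ⟨k, hk1, hgk⟩
    · rw [Set.mem_singleton_iff] at hg0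
      subst hg0
      rw [s0, map_sub, map_sub, map_mul, map_mul, hYφ, hU, hV, hbH, sub_self]
    · have hex : ∃ k', 1 ≤ k' ∧ g = srel P k' := ⟨k, hk1, hgk⟩
      have hidx : idx P g = hex.choose := by rw [idx]; exact dif_pos hex
      have hle : hex.choose ≤ m := by
        rw [← hidx, hm]
        exact Finset.le_sup hg
      rw [hex.choose_spec.2]
      exact hsk _ hex.choose_spec.1 hle
  -- but φ does not kill wel
  have hwel : φ (wel P) = 0 := hcl φ hkill
  have hpsiw : ψ (wel P) = 0 := by rw [hcoe, hwel]; rfl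
  have hval : ψ (wel P) = (E P 0 (2*m+15) : A P) := by
    rw [wel, map_mul, map_mul, hψX, hψY]
    have hA : (aa P m : A P) * bb P m * aa P m = E P 0 (2*m+15) := by
      have h1 : (aa P m : A P) * bb P m * aa P m = aa P m * bb P m ^ 1 * aa P m := by
        rw [pow_one]
      rw [h1]
      exact key P m 1 le_rfl (by omega)
    exact hA
  rw [hpsiw] at hval
  exact E_ne_zero P 0 (2*m+15) hval.symm

end NLN


/-- Over a countable field `P` there is a countable associative unital `P`-algebra `H` that
is not logically noetherian: for some `n`, some `S ⊆ FreeAlgebra P (Fin n)` and some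
`w ∈ cl_H(S)`, no finite subset `S₀ ⊆ S` satisfies `w ∈ cl_H(S₀)`. -/
theorem exists_countable_algebra_not_logicallyNoetherian (P : Type) [Field P] [Countable P] :
    ∃ (H : Type) (instH : Ring H) (instA : @Algebra P H inferInstance instH.toSemiring),
      Countable H ∧
      ∃ (n : ℕ) (S : Set (FreeAlgebra P (Fin n))) (w : FreeAlgebra P (Fin n)),
        w ∈ @AClosure P _ H instH.toSemiring instA n S ∧
          ∀ S₀ : Finset (FreeAlgebra P (Fin n)), ↑S₀ ⊆ S →
            w ∉ @AClosure P _ H instH.toSemiring instA n (S₀ : Set (FreeAlgebra P (Fin n))) := by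
  refine ⟨NLN.Hsub P, inferInstance, inferInstance, NLN.countable_Hsub P, 4, NLN.SS P,
    NLN.wel P, NLN.wel_mem_closure P, fun S₀ hS₀ => NLN.not_mem_closure_finset P S₀ hS₀⟩
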